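/- Let G = ⟨S | R⟩ be a finitely presented group and for each g ∈ G let W_g be a nonempty set of words in S representing g. Suppose there is C > 0 such that: (i) for every g ∈ G some w ∈ W_g has |w| ≤ C·‖g‖_S; (ii) every null-homotopic word of the form w_1 w_2 w_3 with w_i ∈ W_{g_i} has area at most C·(|w_1|+|w_2|+|w_3|)^2. Then the Dehn function of G satisfies δ_G(N) ≼ N^2 (i.e. δ_G(N) ≤ C'·N^2 + C'·N + C' for some constant C'). -/
import Mathlib


/-- `L` is a list of conjugates of relators (or inverses of relators) from `R`
whose product is `g`: a witness that the null-homotopic element `g` has area at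
most `L.length`. -/
def IsFilling {S : Type} (R : Finset (FreeGroup S))
    (L : List (FreeGroup S × FreeGroup S)) (g : FreeGroup S) : Prop :=
  (∀ p ∈ L, p.2 ∈ R ∨ p.2⁻¹ ∈ R) ∧ (L.map fun p => p.1 * p.2 * p.1⁻¹).prod = g

namespace DehnAux

variable {S : Type} {R : Finset (FreeGroup S)}

/-- Fillable with a real area bound. -/
def FillB (R : Finset (FreeGroup S)) (g : FreeGroup S) (r : ℝ) : Prop :=
  ∃ L, IsFilling R L g ∧ (L.length : ℝ) ≤ r

theorem FillB.mono {g : FreeGroup S} {r r' : ℝ} (h : FillB R g r) (hr : r ≤ r') :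
    FillB R g r' := by
  obtain ⟨L, hL, hl⟩ := h; exact ⟨L, hL, hl.trans hr⟩

theorem fillB_one : FillB R (1 : FreeGroup S) 0 :=
  ⟨[], ⟨by simp, by simp⟩, by simp⟩

theorem FillB.mul {g h : FreeGroup S} {a b : ℝ} (hg : FillB R g a) (hh : FillB R h b) :
    FillB R (g * h) (a + b) := by
  obtain ⟨L₁, ⟨hL₁, hp₁⟩, hl₁⟩ := hg
  obtain ⟨L₂, ⟨hL₂, hp₂⟩, hl₂⟩ := hh
  refine ⟨L₁ ++ L₂, ⟨?_, ?_⟩, ?_⟩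
  · intro p hp; rcases List.mem_append.mp hp with h | h
    exacts [hL₁ p h, hL₂ p h]
  · rw [List.map_append, List.prod_append, hp₁, hp₂]
  · rw [List.length_append]; push_cast; linarith

theorem FillB.conj {g : FreeGroup S} {a : ℝ} (c : FreeGroup S) (hg : FillB R g a) :
    FillB R (c * g * c⁻¹) a := by
  obtain ⟨L, ⟨hL, hp⟩, hl⟩ := hg
  refine ⟨L.map fun p => (c * p.1, p.2), ⟨?_, ?_⟩, by simpa using hl⟩
  · intro p hp
    obtain ⟨q, hq, rfl⟩ := List.mem_map.mp hp
    exact hL q hq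
  · subst hp
    rw [List.map_map]
    clear hl hL
    induction L with
    | nil => simp
    | cons q L ih =>
        simp only [List.map_cons, List.prod_cons] at *
        rw [ih]
        simp [mul_assoc]

theorem FillB.inv {g : FreeGroup S} {a : ℝ} (hg : FillB R g a) : FillB R g⁻¹ a := by
  obtain ⟨L, ⟨hL, hp⟩, hl⟩ := hg
  refine ⟨L.reverse.map fun p => (p.1, p.2⁻¹), ⟨?_, ?_⟩, by simpa using hl⟩
  · intro p hp
    obtain ⟨q, hq, rfl⟩ := List.mem_map.mp hp
    rcases hL q (List.mem_reverse.mp hq) with h | h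
    · right; simpa using h
    · left; simpa using h
  · subst hp
    rw [List.prod_inv_reverse, List.map_map, List.map_reverse, List.map_map]
    have he : (List.map ((fun p : FreeGroup S × FreeGroup S => p.1 * p.2 * p.1⁻¹) ∘
        fun p => (p.1, p.2⁻¹)) L) =
        List.map ((fun x => x⁻¹) ∘ fun p : FreeGroup S × FreeGroup S => p.1 * p.2 * p.1⁻¹) L := by
      apply List.map_congr_left
      intro p _
      simp [mul_assoc, Function.comp]
    rw [he]

theorem fillB_of_mem {g : FreeGroup S}
    (hg : g ∈ Subgroup.normalClosure (R : Set (FreeGroup S))) :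
    ∃ n : ℕ, FillB R g n := by
  refine Subgroup.closure_induction (fun x hx => ?_) ?_ (fun x y _ _ hx hy => ?_)
    (fun x _ hx => ?_) hg
  · rw [Group.mem_conjugatesOfSet_iff] at hx
    obtain ⟨r, hr, hc⟩ := hx
    obtain ⟨c, hc⟩ := isConj_iff.mp hc
    exact ⟨1, [(c, r)], ⟨by simpa using Or.inl hr, by simpa using hc⟩, by simp⟩
  · exact ⟨0, by simpa using (fillB_one : FillB R 1 0)⟩
  · obtain ⟨n, hn⟩ := hx; obtain ⟨m, hm⟩ := hy
    exact ⟨n + m, by exact_mod_cast hn.mul hm⟩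
  · obtain ⟨n, hn⟩ := hx; exact ⟨n, hn.inv⟩

end DehnAux

open DehnAux in

set_option maxHeartbeats 1000000 in
open DehnAux in
/-- let `G = ⟨S ∣ R⟩` be a finitely presented group and for each
`g ∈ G` let `W g` be a nonempty set of words representing `g`. If for some `C > 0`
(i) every `g` has a representative in `W g` of length at most `C·‖g‖`, and (ii) every
null-homotopic concatenation `w₁w₂w₃` with `wᵢ ∈ W gᵢ` has area at most
`C(|w₁|+|w₂|+|w₃|)²`, then the Dehn function of `G` is bounded above by
`C'·N² + C'·N + C'` for some `C' > 0`. -/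
theorem dehn_quadratic_from_triangles (S : Type) [Fintype S] (R : Finset (FreeGroup S))
    (W : (FreeGroup S ⧸ Subgroup.normalClosure (R : Set (FreeGroup S))) → Set (List (S × Bool)))
    (hWrep : ∀ g, ∀ w ∈ W g,
      QuotientGroup.mk' (Subgroup.normalClosure (R : Set (FreeGroup S))) (FreeGroup.mk w) = g)
    (hWne : ∀ g, (W g).Nonempty)
    (C : ℝ) (hC : 0 < C)
    (h1 : ∀ g (L : List (S × Bool)),
      QuotientGroup.mk' (Subgroup.normalClosure (R : Set (FreeGroup S))) (FreeGroup.mk L) = g →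
      ∃ w ∈ W g, (w.length : ℝ) ≤ C * L.length)
    (h2 : ∀ g₁ g₂ g₃ (w₁ w₂ w₃ : List (S × Bool)), w₁ ∈ W g₁ → w₂ ∈ W g₂ → w₃ ∈ W g₃ →
      FreeGroup.mk (w₁ ++ w₂ ++ w₃) ∈ Subgroup.normalClosure (R : Set (FreeGroup S)) →
      ∃ L : List (FreeGroup S × FreeGroup S),
        IsFilling R L (FreeGroup.mk (w₁ ++ w₂ ++ w₃)) ∧
        (L.length : ℝ) ≤ C * ((w₁.length + w₂.length + w₃.length : ℕ) : ℝ) ^ 2) :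
    ∃ C' : ℝ, 0 < C' ∧
      ∀ w : List (S × Bool),
        FreeGroup.mk w ∈ Subgroup.normalClosure (R : Set (FreeGroup S)) →
        ∃ L : List (FreeGroup S × FreeGroup S),
          IsFilling R L (FreeGroup.mk w) ∧
          (L.length : ℝ) ≤ C' * (w.length : ℝ) ^ 2 + C' * w.length + C' := by
  -- membership in the normal closure iff killed by the quotient map
  have hker : ∀ x : FreeGroup S, x ∈ Subgroup.normalClosure (R : Set (FreeGroup S)) ↔
      QuotientGroup.mk' (Subgroup.normalClosure (R : Set (FreeGroup S))) x = 1 := by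
    intro x
    exact (QuotientGroup.eq_one_iff x).symm
  -- the empty word represents 1 and lies in W 1
  have hempty : ([] : List (S × Bool)) ∈ W 1 := by
    obtain ⟨e, heW, helen⟩ := h1 1 [] (by rw [← FreeGroup.one_eq_mk, map_one])
    have he0 : e.length = 0 := by
      have h' : (e.length : ℝ) ≤ 0 := by simpa using helen
      exact_mod_cast le_antisymm h' (by positivity)
    rwa [List.length_eq_zero_iff.mp he0] at heW
  -- representative choice functions
  choose rep hrepW hreplen using fun p : List (S × Bool) => h1 _ p rfl
  have hcrep := fun p : List (S × Bool) =>
    h1 ((QuotientGroup.mk' (Subgroup.normalClosure (R : Set (FreeGroup S)))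
        (FreeGroup.mk p))⁻¹) (FreeGroup.invRev p)
      (by rw [← FreeGroup.inv_mk, map_inv])
  choose crep hcrepW hcreplen using hcrep
  have hcreplen' : ∀ p : List (S × Bool), ((crep p).length : ℝ) ≤ C * p.length := by
    intro p
    have h' := hcreplen p
    rwa [FreeGroup.invRev_length] at h'
  -- the triangle inequality from h2
  have tri : ∀ (g₁ g₂ g₃) (w₁ w₂ w₃ : List (S × Bool)), w₁ ∈ W g₁ → w₂ ∈ W g₂ → w₃ ∈ W g₃ →
      g₁ * g₂ * g₃ = 1 →
      FillB R (FreeGroup.mk w₁ * FreeGroup.mk w₂ * FreeGroup.mk w₃)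
        (C * ((w₁.length : ℝ) + w₂.length + w₃.length) ^ 2) := by
    intro g₁ g₂ g₃ w₁ w₂ w₃ hw₁ hw₂ hw₃ hprod
    have hsplit : FreeGroup.mk (w₁ ++ w₂ ++ w₃)
        = FreeGroup.mk w₁ * FreeGroup.mk w₂ * FreeGroup.mk w₃ := by
      rw [FreeGroup.mul_mk, FreeGroup.mul_mk]
    have hmem : FreeGroup.mk (w₁ ++ w₂ ++ w₃) ∈
        Subgroup.normalClosure (R : Set (FreeGroup S)) := by
      rw [hker, hsplit, map_mul, map_mul, hWrep _ _ hw₁, hWrep _ _ hw₂, hWrep _ _ hw₃, hprod]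
    obtain ⟨L, hL, hlen⟩ := h2 g₁ g₂ g₃ w₁ w₂ w₃ hw₁ hw₂ hw₃ hmem
    refine ⟨L, by rwa [hsplit] at hL, ?_⟩
    calc (L.length : ℝ) ≤ C * ((w₁.length + w₂.length + w₃.length : ℕ) : ℝ) ^ 2 := hlen
      _ = C * ((w₁.length : ℝ) + w₂.length + w₃.length) ^ 2 := by push_cast; ring
  -- constant for single letters
  have hfill1 : ∀ x : S × Bool, ∃ n : ℕ,
      FillB R (FreeGroup.mk [x] * FreeGroup.mk (crep [x])) n := by
    intro x
    apply fillB_of_mem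
    rw [hker, map_mul, hWrep _ _ (hcrepW [x]), mul_inv_cancel]
  choose mf hmf using hfill1
  set m : ℕ := Finset.univ.sup mf with hm
  have hmle : ∀ x : S × Bool, (mf x : ℝ) ≤ (m : ℝ) := by
    intro x
    exact_mod_cast Finset.le_sup (Finset.mem_univ x)
  -- the main inductive claim
  have key : ∀ N : ℕ, ∀ p : List (S × Bool), p.length = N →
      FillB R (FreeGroup.mk p * FreeGroup.mk (crep p))
        (32 * C ^ 3 * (N : ℝ) ^ 2 + (m : ℝ) * N) := by
    intro N
    induction N using Nat.strong_induction_on with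
    | _ N ih =>
      intro p hp
      rcases Nat.lt_or_ge N 2 with hN2 | hN2
      · interval_cases N
        · -- N = 0
          have hp0 : p = [] := List.length_eq_zero_iff.mp hp
          subst hp0
          have hc0 : crep ([] : List (S × Bool)) = [] := by
            apply List.length_eq_zero_iff.mp
            have h' : ((crep ([] : List (S × Bool))).length : ℝ) ≤ 0 := by
              simpa using hcreplen' ([] : List (S × Bool))
            exact_mod_cast le_antisymm h' (by positivity)
          rw [hc0, ← FreeGroup.one_eq_mk, mul_one]
          exact fillB_one.mono (by norm_num)
        · -- N = 1
          obtain ⟨x, rfl⟩ := List.length_eq_one_iff.mp hp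
          refine (hmf x).mono ?_
          have h' := hmle x
          push_cast
          nlinarith [pow_pos hC 3]
      · -- N ≥ 2 : split the word
        set N₁ : ℕ := (N + 1) / 2 with hN₁def
        have hN₁lt : N₁ < N := by omega
        have hN₂lt : N - N₁ < N := by omega
        set p₁ := p.take N₁ with hp₁def
        set p₂ := p.drop N₁ with hp₂def
        have hl₁ : p₁.length = N₁ := by
          rw [hp₁def, List.length_take, hp]; omega
        have hl₂ : p₂.length = N - N₁ := by
          rw [hp₂def, List.length_drop, hp]
        have hpp : FreeGroup.mk p₁ * FreeGroup.mk p₂ = FreeGroup.mk p := by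
          rw [FreeGroup.mul_mk, List.take_append_drop]
        have hσp : QuotientGroup.mk' (Subgroup.normalClosure (R : Set (FreeGroup S)))
            (FreeGroup.mk p) =
            QuotientGroup.mk' (Subgroup.normalClosure (R : Set (FreeGroup S)))
              (FreeGroup.mk p₁) *
            QuotientGroup.mk' (Subgroup.normalClosure (R : Set (FreeGroup S)))
              (FreeGroup.mk p₂) := by
          rw [← map_mul, hpp]
        -- triangle X : c₂ · c₁ · r
        have hX := tri _ _ _ (crep p₂) (crep p₁) (rep p) (hcrepW p₂) (hcrepW p₁) (hrepW p)
          (by rw [hσp]; group)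
        -- triangle Y : r · c · ε
        have hY := tri _ _ _ (rep p) (crep p) [] (hrepW p) (hcrepW p) hempty
          (by group)
        rw [← FreeGroup.one_eq_mk, mul_one] at hY
        simp only [List.length_nil, Nat.cast_zero, add_zero] at hY
        -- induction hypotheses
        have IH₁ := ih N₁ hN₁lt p₁ hl₁
        have IH₂ := ih (N - N₁) hN₂lt p₂ hl₂
        -- assemble
        have hZ := hY.mul ((hX.inv).conj (FreeGroup.mk (crep p))⁻¹)
        have hZeq : FreeGroup.mk (rep p) * FreeGroup.mk (crep p) *
            ((FreeGroup.mk (crep p))⁻¹ *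
              (FreeGroup.mk (crep p₂) * FreeGroup.mk (crep p₁) * FreeGroup.mk (rep p))⁻¹ *
              ((FreeGroup.mk (crep p))⁻¹)⁻¹)
            = (FreeGroup.mk (crep p₁))⁻¹ * (FreeGroup.mk (crep p₂))⁻¹ *
              FreeGroup.mk (crep p) := by
          group
        rw [hZeq] at hZ
        have main := (IH₁.mul (IH₂.conj (FreeGroup.mk (crep p₁))⁻¹)).mul hZ
        have heq : FreeGroup.mk p₁ * FreeGroup.mk (crep p₁) *
            ((FreeGroup.mk (crep p₁))⁻¹ * (FreeGroup.mk p₂ * FreeGroup.mk (crep p₂)) *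
              ((FreeGroup.mk (crep p₁))⁻¹)⁻¹) *
            ((FreeGroup.mk (crep p₁))⁻¹ * (FreeGroup.mk (crep p₂))⁻¹ *
              FreeGroup.mk (crep p))
            = FreeGroup.mk p * FreeGroup.mk (crep p) := by
          rw [← hpp]; group
        rw [heq] at main
        refine main.mono ?_
        -- numeric bookkeeping
        have hn12 : N₁ + (N - N₁) = N := by omega
        have hcast : (N₁ : ℝ) + ((N - N₁ : ℕ) : ℝ) = (N : ℝ) := by
          exact_mod_cast congrArg (Nat.cast : ℕ → ℝ) hn12
        have h3a : 3 * (N₁ : ℝ) ≤ 2 * N := by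
          have : 3 * N₁ ≤ 2 * N := by omega
          exact_mod_cast this
        have h3b : 3 * ((N - N₁ : ℕ) : ℝ) ≤ 2 * N := by
          have : 3 * (N - N₁) ≤ 2 * N := by omega
          exact_mod_cast this
        have hn1nn : (0 : ℝ) ≤ (N₁ : ℝ) := Nat.cast_nonneg _
        have hn2nn : (0 : ℝ) ≤ ((N - N₁ : ℕ) : ℝ) := Nat.cast_nonneg _
        have hrl := hreplen p
        have hcl := hcreplen' p
        have hcl1 := hcreplen' p₁
        have hcl2 := hcreplen' p₂
        rw [hl₁] at hcl1
        rw [hl₂] at hcl2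
        rw [hp] at hrl hcl
        have hrnn : (0 : ℝ) ≤ ((rep p).length : ℝ) := Nat.cast_nonneg _
        have hcnn : (0 : ℝ) ≤ ((crep p).length : ℝ) := Nat.cast_nonneg _
        have hc1nn : (0 : ℝ) ≤ ((crep p₁).length : ℝ) := Nat.cast_nonneg _
        have hc2nn : (0 : ℝ) ≤ ((crep p₂).length : ℝ) := Nat.cast_nonneg _
        have hNnn : (0 : ℝ) ≤ (N : ℝ) := Nat.cast_nonneg _
        -- the two triangles cost at most 4·C³·N² each
        have hbY : C * (((rep p).length : ℝ) + ((crep p).length : ℝ)) ^ 2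
            ≤ 4 * C ^ 3 * (N : ℝ) ^ 2 := by
          nlinarith [mul_nonneg (mul_nonneg hC.le
            (by linarith : (0:ℝ) ≤ 2 * C * (N : ℝ) - (((rep p).length : ℝ) + (crep p).length)))
            (by linarith : (0:ℝ) ≤ 2 * C * (N : ℝ) + (((rep p).length : ℝ) + (crep p).length))]
        have hbX : C * (((crep p₂).length : ℝ) + ((crep p₁).length : ℝ)
              + ((rep p).length : ℝ)) ^ 2 ≤ 4 * C ^ 3 * (N : ℝ) ^ 2 := by
          have hs : ((crep p₂).length : ℝ) + ((crep p₁).length : ℝ) + ((rep p).length : ℝ)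
              ≤ 2 * C * (N : ℝ) := by
            have : C * ((N - N₁ : ℕ) : ℝ) + C * (N₁ : ℝ) + C * (N : ℝ) = 2 * C * N := by
              nlinarith [hcast]
            linarith
          nlinarith [mul_nonneg (mul_nonneg hC.le
            (by linarith : (0:ℝ) ≤ 2 * C * (N : ℝ) - (((crep p₂).length : ℝ)
              + ((crep p₁).length : ℝ) + (rep p).length)))
            (by linarith : (0:ℝ) ≤ 2 * C * (N : ℝ) + (((crep p₂).length : ℝ)
              + ((crep p₁).length : ℝ) + (rep p).length))]
        -- splitting inequality
        have h5 : (N₁ : ℝ) ^ 2 + ((N - N₁ : ℕ) : ℝ) ^ 2 ≤ (5 / 9) * (N : ℝ) ^ 2 := by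
          nlinarith [mul_nonneg (by linarith : (0:ℝ) ≤ 2 * (N : ℝ) - 3 * N₁)
            (by linarith : (0:ℝ) ≤ 2 * (N : ℝ) - 3 * ((N - N₁ : ℕ) : ℝ))]
        have h5' := mul_le_mul_of_nonneg_left h5 (pow_pos hC 3).le
        have hm0 : (0 : ℝ) ≤ (m : ℝ) := Nat.cast_nonneg _
        nlinarith [h5', hbY, hbX, hcast, hm0, mul_nonneg hm0 hNnn]
  -- conclusion
  refine ⟨33 * C ^ 3 + (m : ℝ) + 1, by positivity, ?_⟩
  intro w hw
  have h0 := key w.length w rfl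
  have hσw : QuotientGroup.mk' (Subgroup.normalClosure (R : Set (FreeGroup S)))
      (FreeGroup.mk w) = 1 := (hker _).mp hw
  have hc1 : crep w ∈ W 1 := by
    have h' := hcrepW w
    rwa [hσw, inv_one] at h'
  have htw := tri 1 1 1 (crep w) [] [] hc1 hempty hempty (by group)
  rw [← FreeGroup.one_eq_mk, mul_one, mul_one] at htw
  simp only [List.length_nil, Nat.cast_zero, add_zero] at htw
  have final := h0.mul htw.inv
  rw [mul_inv_cancel_right] at final
  refine final.mono ?_
  have hcl := hcreplen' w
  have hcnn : (0 : ℝ) ≤ ((crep w).length : ℝ) := Nat.cast_nonneg _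
  have hNnn : (0 : ℝ) ≤ (w.length : ℝ) := Nat.cast_nonneg _
  have hm0 : (0 : ℝ) ≤ (m : ℝ) := Nat.cast_nonneg _
  have hb : C * (((crep w).length : ℝ)) ^ 2 ≤ C ^ 3 * (w.length : ℝ) ^ 2 := by
    nlinarith [mul_nonneg (mul_nonneg hC.le
      (by linarith : (0:ℝ) ≤ C * (w.length : ℝ) - ((crep w).length : ℝ)))
      (by linarith : (0:ℝ) ≤ C * (w.length : ℝ) + ((crep w).length : ℝ))]
  nlinarith [pow_pos hC 3, sq_nonneg ((w.length : ℝ)), mul_nonneg hm0 hNnn,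
    mul_nonneg (mul_nonneg hm0 hNnn) hNnn, mul_nonneg (pow_pos hC 3).le hNnn]
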